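/- In NSym, the antipode of the one-row immaculate function satisfies S(𝒮_n) = (-1)^n 𝒮_{1^n}, where 𝒮_n = H_n and 𝒮_{1^n} = Det(H_{j-i+1})_{1≤i,j≤n} is the noncommutative determinant of the n×n matrix with (i,j) entry H_{j-i+1} (with H_0 = 1 and H_m = 0 for m < 0), defined as Det(A) = ∑_{σ ∈ S_n} sgn(σ) a_{1,σ(1)} a_{2,σ(2)} ... a_{n,σ(n)}. -/

import Mathlib

open TensorProduct

/-- The noncommutative determinant `Det(H_{j-i+1})_{1≤i,j≤n}`, with factors in
row order, `H_0 = 1` and `H_m = 0` for `m < 0`; this is the immaculate function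
`𝒮_{1^n}`. -/
noncomputable def detOneColumn {N : Type} [Ring N] (Hh : ℕ → N) (n : ℕ) : N :=
  ∑ σ : Equiv.Perm (Fin n), ((Equiv.Perm.sign σ : ℤˣ) : ℤ) •
    ((List.finRange n).map (fun (i : Fin n) =>
      if (i : ℕ) ≤ (σ i : ℕ) + 1 then Hh ((σ i : ℕ) + 1 - (i : ℕ)) else 0)).prod

namespace NsymAux

open Equiv List

lemma finRange_succ_snoc (n : ℕ) :
    List.finRange (n+1) = (List.finRange n).map Fin.castSucc ++ [Fin.last n] := by
  apply List.map_injective_iff.mpr Fin.val_injective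
  simp [List.map_map, Function.comp_def, List.range_succ]

/-- decomposition of a permutation of `Fin (n+1)` at the last element. -/
def lastDecompose (n : ℕ) : Perm (Fin (n+1)) ≃ Fin (n+1) × Perm (Fin n) :=
  (Equiv.permCongr finSuccEquivLast).trans
    (Equiv.Perm.decomposeOption.trans (Equiv.prodCongr finSuccEquivLast.symm (Equiv.refl _)))

lemma lastDecompose_symm_apply {n : ℕ} (p : Fin (n+1)) (τ : Perm (Fin n)) (x : Fin (n+1)) :
    (lastDecompose n).symm (p, τ) x =
      finSuccEquivLast.symm ((Equiv.swap none (finSuccEquivLast p) * τ.optionCongr)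
        (finSuccEquivLast x)) := rfl

lemma lastDecompose_symm_apply_last {n : ℕ} (p : Fin (n+1)) (τ : Perm (Fin n)) :
    (lastDecompose n).symm (p, τ) (Fin.last n) = p := by
  simp [lastDecompose_symm_apply]

lemma lastDecompose_symm_apply_castSucc {n : ℕ} (p : Fin (n+1)) (τ : Perm (Fin n)) (i : Fin n) :
    (lastDecompose n).symm (p, τ) (Fin.castSucc i) =
      if Fin.castSucc (τ i) = p then Fin.last n else Fin.castSucc (τ i) := by
  rw [lastDecompose_symm_apply]
  rcases Fin.eq_castSucc_or_eq_last p with ⟨q, rfl⟩ | rfl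
  · simp only [finSuccEquivLast_castSucc, Perm.mul_apply, optionCongr_apply, Option.map_some]
    by_cases h : τ i = q
    · simp [h, Equiv.swap_apply_right]
    · rw [Equiv.swap_apply_of_ne_of_ne (by simp) (by simpa using h)]
      simp [h, (Fin.castSucc_injective n).ne h]
  · simp [Equiv.swap_self, Fin.castSucc_lt_last, (Fin.castSucc_lt_last (τ i)).ne]

lemma lastDecompose_symm_sign {n : ℕ} (p : Fin (n+1)) (τ : Perm (Fin n)) :
    Perm.sign ((lastDecompose n).symm (p, τ)) =
      (if p = Fin.last n then 1 else -1) * Perm.sign τ := by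
  have : (lastDecompose n).symm (p, τ) =
      (finSuccEquivLast.symm).permCongr (Equiv.swap none (finSuccEquivLast p) * τ.optionCongr) := by
    ext x; rw [lastDecompose_symm_apply]; rfl
  rw [this, Equiv.Perm.sign_permCongr, map_mul, Equiv.optionCongr_sign]
  congr 1
  by_cases h : p = Fin.last n
  · simp [h, Equiv.swap_self]
  · have hne : none ≠ finSuccEquivLast p := by
      rw [← finSuccEquivLast_last, Ne, EmbeddingLike.apply_eq_iff_eq]
      exact fun hh => h hh.symm
    rw [Equiv.Perm.sign_swap hne]
    simp [h]

variable {N : Type} [Ring N]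

/-- general noncommutative determinant, factors in row order. -/
noncomputable def Det {n : ℕ} (f : Fin n → Fin n → N) : N :=
  ∑ σ : Perm (Fin n), ((Perm.sign σ : ℤˣ) : ℤ) •
    ((List.finRange n).map (fun i => f i (σ i))).prod

lemma det_succ_last_row (n : ℕ) (f : Fin (n+1) → Fin (n+1) → N) :
    Det f = ∑ p : Fin (n+1),
      (if p = Fin.last n then (1:ℤ) else -1) •
        ((Det (fun i c => f (Fin.castSucc i)
            (if Fin.castSucc c = p then Fin.last n else Fin.castSucc c))) * f (Fin.last n) p) := by
  rw [Det, ← Equiv.sum_comp (lastDecompose n).symm, Fintype.sum_prod_type]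
  refine Finset.sum_congr rfl fun p _ => ?_
  rw [Det, Finset.sum_mul, Finset.smul_sum]
  refine Finset.sum_congr rfl fun τ _ => ?_
  rw [lastDecompose_symm_sign, finRange_succ_snoc, List.map_append, List.prod_append,
    List.map_map]
  simp only [List.map_cons, List.map_nil, List.prod_cons, List.prod_nil, mul_one,
    Function.comp_def, lastDecompose_symm_apply_last, lastDecompose_symm_apply_castSucc,
    smul_mul_assoc, smul_smul]
  congr 1
  by_cases h : p = Fin.last n <;> simp [h, mul_comm]

variable (Hh : ℕ → N)

/-- the entries of the matrix whose determinant is `g`: columns `0,…,n-2` are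
the columns of the `detOneColumn` matrix, while the last column has entries
`H_{m-i}`. -/
def ent (m n : ℕ) (i c : Fin n) : N :=
  if (c:ℕ) + 1 = n then (if (i:ℕ) ≤ m then Hh (m - (i:ℕ)) else 0)
  else (if (i:ℕ) ≤ (c:ℕ)+1 then Hh ((c:ℕ)+1-(i:ℕ)) else 0)

noncomputable def g (m n : ℕ) : N := Det (ent Hh m n)

lemma detOneColumn_eq_Det (n : ℕ) : detOneColumn Hh n =
    Det (fun i c : Fin n => if (i:ℕ) ≤ (c:ℕ)+1 then Hh ((c:ℕ)+1-(i:ℕ)) else 0) := rfl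

lemma g_self (n : ℕ) : g Hh n n = detOneColumn Hh n := by
  rw [g, detOneColumn_eq_Det]
  congr 1
  funext i c
  rw [ent]
  by_cases h : (c:ℕ) + 1 = n
  · rw [if_pos h]; simp [h]
  · rw [if_neg h]

lemma detOneColumn_zero : detOneColumn Hh 0 = 1 := by
  rw [detOneColumn]
  simp

lemma g_one (m : ℕ) : g Hh m 1 = Hh m := by
  rw [g, Det]
  rw [Finset.sum_eq_single 1 (fun σ _ _ => absurd (Subsingleton.elim σ 1) ‹_›) (by simp)]
  simp [ent]

lemma g_rec (k m : ℕ) :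
    g Hh m (k+2) = g Hh (k+1) (k+1) * (if k+1 ≤ m then Hh (m-(k+1)) else 0)
      - g Hh m (k+1) * Hh 0 := by
  rw [g, det_succ_last_row]
  rw [← Finset.sum_subset
    (Finset.subset_univ ({Fin.castSucc (Fin.last k), Fin.last (k+1)} : Finset (Fin (k+2))))]
  · rw [Finset.sum_pair (by
      intro h
      have := congrArg Fin.val h
      simp at this)]
    have h2 : (fun i c => ent Hh m (k+2) (Fin.castSucc i)
        (if Fin.castSucc c = Fin.castSucc (Fin.last k) then Fin.last (k+1) else Fin.castSucc c))
        = ent Hh m (k+1) := by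
      funext i c
      by_cases hc : c = Fin.last k
      · rw [if_pos (by rw [hc]), ent, ent]
        simp [hc]
      · rw [if_neg (by simpa [Fin.castSucc_inj] using hc), ent, ent]
        have hcv : (c : ℕ) + 1 ≠ k + 1 := by
          simpa [Fin.ext_iff] using hc
        have hcv2 : (c : ℕ) + 1 ≠ k + 2 := by omega
        simp [Fin.coe_castSucc, hcv, hcv2, show (c:ℕ) ≠ k + 1 by omega, show (c:ℕ) ≠ k by omega]
    have h1 : (fun i c => ent Hh m (k+2) (Fin.castSucc i)
        (if Fin.castSucc c = Fin.last (k+1) then Fin.last (k+1) else Fin.castSucc c))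
        = ent Hh (k+1) (k+1) := by
      funext i c
      rw [if_neg (Fin.castSucc_lt_last c).ne, ent, ent]
      by_cases hc : (c : ℕ) + 1 = k + 1
      · have hcv2 : (c : ℕ) + 1 ≠ k + 2 := by omega
        simp [Fin.coe_castSucc, hcv2, hc]
      · have hcv2 : (c : ℕ) + 1 ≠ k + 2 := by
          have := c.isLt; omega
        simp [Fin.coe_castSucc, hcv2, hc, show (c:ℕ) ≠ k + 1 by have := c.isLt; omega, show (c:ℕ) ≠ k by omega]
    rw [h1, h2]
    have e2 : ent Hh m (k+2) (Fin.last (k+1)) (Fin.castSucc (Fin.last k)) = Hh 0 := by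
      rw [ent]
      norm_num
    have e1 : ent Hh m (k+2) (Fin.last (k+1)) (Fin.last (k+1))
        = (if k+1 ≤ m then Hh (m-(k+1)) else 0) := by
      rw [ent]
      norm_num
    rw [e1, e2]
    rw [if_neg (by
      intro h
      have := congrArg Fin.val h
      simp at this), if_pos rfl, one_smul, neg_one_smul, g, g]
    abel
  · intro p _ hp
    have hpv : (p : ℕ) < k := by
      simp only [Finset.mem_insert, Finset.mem_singleton] at hp
      push_neg at hp
      obtain ⟨h1', h2'⟩ := hp
      have b1 : (p : ℕ) ≠ k := fun h => h1' (Fin.ext (by simp [h]))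
      have b2 : (p : ℕ) ≠ k + 1 := fun h => h2' (Fin.ext (by simp [h]))
      have := p.isLt; omega
    have : ent Hh m (k+2) (Fin.last (k+1)) p = 0 := by
      rw [ent, if_neg (by omega), if_neg (by simp; omega)]
    rw [this, mul_zero, smul_zero]

lemma g_unroll (h0 : Hh 0 = 1) (n : ℕ) : ∀ m : ℕ,
    g Hh m (n+1) = ∑ r ∈ Finset.range (n+1),
      (-1:ℤ)^(n-r) • (detOneColumn Hh r * (if r ≤ m then Hh (m - r) else 0)) := by
  induction n with
  | zero =>
    intro m
    simp [g_one, detOneColumn_zero]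
  | succ k ihm =>
    intro m
    rw [g_rec, ihm m, g_self, h0, mul_one]
    conv_rhs => rw [Finset.sum_range_succ]
    rw [Nat.sub_self, pow_zero, one_smul]
    rw [sub_eq_add_neg, add_comm, ← Finset.sum_neg_distrib]
    congr 1
    refine Finset.sum_congr rfl fun r hr => ?_
    have hr' : r ≤ k := Nat.lt_succ_iff.mp (Finset.mem_range.mp hr)
    rw [← neg_smul]
    congr 1
    have : k + 1 - r = (k - r) + 1 := by omega
    rw [this, pow_succ]
    ring

/-- the key determinantal recursion. -/
lemma detOneColumn_rec (h0 : Hh 0 = 1) (n : ℕ) :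
    detOneColumn Hh (n+1) = ∑ r ∈ Finset.range (n+1),
      (-1:ℤ)^(n-r) • (detOneColumn Hh r * Hh (n+1-r)) := by
  rw [← g_self, g_unroll Hh h0 n (n+1)]
  refine Finset.sum_congr rfl fun r hr => ?_
  have : r ≤ n + 1 := by
    have := Finset.mem_range.mp hr; omega
  rw [if_pos this]

end NsymAux

/-- in `NSym`, the antipode of the one-row immaculate function
satisfies `S(𝒮_n) = (-1)^n 𝒮_{1^n}`, where `𝒮_n = H_n` and
`𝒮_{1^n} = Det(H_{j-i+1})` is the noncommutative determinant
`∑_{σ ∈ S_n} sgn(σ) a_{1,σ(1)} ⋯ a_{n,σ(n)}`. -/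
theorem nsym_antipode_one_row (K : Type) [Field K] (N : Type) [Ring N]
    [HopfAlgebra K N] (Hh : ℕ → N)
    (h0 : Hh 0 = 1)
    (hcomul : ∀ n : ℕ, Coalgebra.comul (R := K) (Hh n) =
      ∑ i ∈ Finset.range (n + 1), Hh i ⊗ₜ[K] Hh (n - i))
    (hcounit : ∀ n : ℕ,
      Coalgebra.counit (R := K) (Hh n) = if n = 0 then (1 : K) else 0)
    (n : ℕ) :
    HopfAlgebra.antipode (R := K) (Hh n) =
      ((-1 : ℤ) ^ n) • detOneColumn Hh n := by
  have conv : ∀ j : ℕ, ∑ i ∈ Finset.range (j+1),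
      HopfAlgebra.antipode (R := K) (Hh i) * Hh (j - i) = if j = 0 then (1:N) else 0 := by
    intro j
    have h := HopfAlgebra.mul_antipode_rTensor_comul_apply (R := K) (Hh j)
    rw [hcomul j, map_sum, map_sum] at h
    simp only [LinearMap.rTensor_tmul, LinearMap.mul'_apply] at h
    rw [h, hcounit j, apply_ite (algebraMap K N), map_one, map_zero]
  induction n using Nat.strong_induction_on with
  | _ n ih =>
    cases n with
    | zero =>
      have h := conv 0
      norm_num [Finset.sum_range_one, h0] at h
      simp [NsymAux.detOneColumn_zero, h0, h]
    | succ m =>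
      have h := conv (m+1)
      rw [Finset.sum_range_succ, Nat.sub_self, h0, mul_one,
        if_neg (Nat.succ_ne_zero m)] at h
      have hS : HopfAlgebra.antipode (R := K) (Hh (m+1)) =
          -∑ i ∈ Finset.range (m+1),
            ((-1:ℤ)^i • detOneColumn Hh i) * Hh (m+1-i) := by
        rw [eq_neg_iff_add_eq_zero, ← h]
        rw [add_comm]
        congr 1
        refine Finset.sum_congr rfl fun i hi => ?_
        rw [ih i (Finset.mem_range.mp hi)]
      rw [hS, NsymAux.detOneColumn_rec Hh h0 m, Finset.smul_sum, ← Finset.sum_neg_distrib]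
      refine Finset.sum_congr rfl fun r hr => ?_
      have hr' : r ≤ m := Nat.lt_succ_iff.mp (Finset.mem_range.mp hr)
      rw [smul_mul_assoc, ← neg_smul, smul_smul]
      congr 1
      have hexp : (m+1) + (m-r) = (r+1) + 2*(m-r) := by omega
      rw [← pow_add, hexp, pow_add, pow_mul, pow_succ]
      norm_num
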